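/- Let N ≥ 2 and M be integers with 0 ≤ M ≤ N−2, let r_0, …, r_{N−1} be real numbers, and define f : ℝ → ℂ by f(θ) = Σ_{n=0}^{N−1} r_n e^{inθ}. Then f has a spectral null of order M at θ = 0 if and only if there exist real numbers a_0, …, a_{N−M−2} such that f(θ) = Σ_{m=0}^{N−M−2} a_m (1 − e^{iθ})^{m+M+1} for all θ ∈ ℝ; that is, the subspace of such trigonometric polynomials with an M-th order spectral null is spanned by the functions g_n(θ) = (1 − e^{iθ})^n for n = M+1, …, N−1. -/

import Mathlib

open Complex Finset

namespace SpectralNullAux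

open Polynomial

lemma lemA (K : ℕ) (c : ℕ → ℂ) (m : ℕ) :
    iteratedDeriv m (fun θ : ℝ => ∑ n ∈ Finset.range K, c n * Complex.exp (Complex.I * (n : ℂ) * (θ : ℂ))) =
    fun θ : ℝ => ∑ n ∈ Finset.range K, c n * (Complex.I * n) ^ m * Complex.exp (Complex.I * (n : ℂ) * (θ : ℂ)) := by
  induction m with
  | zero => simp
  | succ m ih =>
    rw [iteratedDeriv_succ, ih]
    funext θ
    have h : ∀ n ∈ Finset.range K, HasDerivAt
        (fun θ : ℝ => c n * (Complex.I * n) ^ m * Complex.exp (Complex.I * (n : ℂ) * (θ : ℂ)))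
        (c n * (Complex.I * n) ^ (m + 1) * Complex.exp (Complex.I * (n : ℂ) * (θ : ℂ))) θ := by
      intro n _
      have h0 : HasDerivAt (fun θ : ℝ => (θ : ℂ)) 1 θ := by
        simpa using (hasDerivAt_id θ).ofReal_comp
      have h1 : HasDerivAt (fun θ : ℝ => Complex.I * (n : ℂ) * (θ : ℂ)) (Complex.I * n) θ := by
        simpa using h0.const_mul (Complex.I * (n : ℂ))
      have h3 := (h1.cexp).const_mul (c n * (Complex.I * n) ^ m)
      exact h3.congr_deriv (by ring)
    exact (HasDerivAt.fun_sum h).deriv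

lemma lemA0 (K : ℕ) (c : ℕ → ℂ) (f : ℝ → ℂ)
    (hf : ∀ θ : ℝ, f θ = ∑ n ∈ Finset.range K, c n * Complex.exp (Complex.I * (n : ℂ) * (θ : ℂ)))
    (m : ℕ) : iteratedDeriv m f 0 = ∑ n ∈ Finset.range K, c n * (Complex.I * n) ^ m := by
  have hfe : f = fun θ : ℝ => ∑ n ∈ Finset.range K, c n * Complex.exp (Complex.I * (n : ℂ) * (θ : ℂ)) :=
    funext hf
  rw [hfe, lemA]
  simp

lemma evalOne {R : Type*} [CommRing R] (p : R[X]) (K : ℕ) (h : ∀ j, K ≤ j → p.coeff j = 0) :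
    p.eval 1 = ∑ n ∈ Finset.range K, p.coeff n := by
  have h1 : p.eval 1 = ∑ n ∈ Finset.range (p.natDegree + 1), p.coeff n := by
    simpa using Polynomial.eval_eq_sum_range (R := R) (p := p) 1
  rw [h1]
  rcases le_or_gt (p.natDegree + 1) K with hle | hlt
  · exact Finset.sum_subset (Finset.range_subset_range.2 hle) (fun j _ hj => by
      exact Polynomial.coeff_eq_zero_of_natDegree_lt (by simpa using hj))
  · exact (Finset.sum_subset (Finset.range_subset_range.2 hlt.le) (fun j _ hj => h j (by simpa using hj))).symm

lemma coeff_T_iter {R : Type*} [CommRing R] (Q : R[X]) (m n : ℕ) :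
    ((fun q : R[X] => X * derivative q)^[m] Q).coeff n = (n : R) ^ m * Q.coeff n := by
  induction m generalizing n with
  | zero => simp
  | succ m ih =>
    rw [Function.iterate_succ_apply']
    cases n with
    | zero => simp [Polynomial.mul_coeff_zero]
    | succ n =>
      rw [Polynomial.coeff_X_mul, Polynomial.coeff_derivative, ih]
      push_cast
      ring

lemma lemE {R : Type*} [CommRing R] (M : ℕ) (Q : R[X]) (h : (X - C 1) ^ (M + 1) ∣ Q) :
    ∀ m ≤ M, ((fun q : R[X] => X * derivative q)^[m] Q).eval 1 = 0 := by
  induction M generalizing Q with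
  | zero =>
    intro m hm
    interval_cases m
    simpa [Polynomial.IsRoot] using (Polynomial.dvd_iff_isRoot.1 (by simpa using h))
  | succ M ih =>
    intro m hm
    cases m with
    | zero =>
      have h1 : (X - C 1 : R[X]) ∣ Q := (dvd_pow_self _ (Nat.succ_ne_zero _)).trans h
      simpa [Polynomial.IsRoot] using Polynomial.dvd_iff_isRoot.1 h1
    | succ m =>
      obtain ⟨R', hR⟩ := h
      have hdvd : (X - C 1 : R[X]) ^ (M + 1) ∣ X * derivative Q := by
        refine ⟨X * ((M + 2 : R[X]) * R' + (X - C 1) * derivative R'), ?_⟩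
        rw [hR]
        rw [derivative_mul, Polynomial.derivative_pow]
        simp only [Polynomial.derivative_sub, Polynomial.derivative_X, Polynomial.derivative_C]
        simp only [map_add, map_ofNat, Polynomial.C_eq_natCast, Polynomial.C_1]
        push_cast
        ring
      rw [Function.iterate_succ_apply]
      exact ih _ hdvd m (Nat.succ_le_succ_iff.1 hm)

lemma lemG (m : ℕ) : ∀ (P : ℝ[X]) (N : ℕ), (∀ j, N ≤ j → P.coeff j = 0) →
    (derivative^[m] P).eval 1 = ∑ n ∈ Finset.range N, P.coeff n * (n.descFactorial m : ℝ) := by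
  induction m with
  | zero => intro P N h; simpa using evalOne P N h
  | succ m ih =>
    intro P N h
    rw [Function.iterate_succ_apply]
    cases N with
    | zero =>
      have hP : P = 0 := Polynomial.ext fun j => by simpa using h j (Nat.zero_le j)
      simp [hP]
    | succ K =>
      have h' : ∀ j, Nat.succ K ≤ j → (derivative P).coeff j = 0 := by
        intro j hj
        rw [Polynomial.coeff_derivative, h (j + 1) (by omega), zero_mul]
      rw [ih (derivative P) (K + 1) h', Finset.sum_range_succ,
        Finset.sum_range_succ' (fun n => P.coeff n * (n.descFactorial (m + 1) : ℝ)) K]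
      have hK : (derivative P).coeff K = 0 := by
        rw [Polynomial.coeff_derivative, h (K + 1) le_rfl, zero_mul]
      rw [hK]
      simp only [Nat.zero_descFactorial_succ, Nat.cast_zero, mul_zero, add_zero, zero_mul]
      refine Finset.sum_congr rfl fun x _ => ?_
      rw [Polynomial.coeff_derivative, Nat.succ_descFactorial_succ]
      push_cast
      ring

lemma lemF (N M : ℕ) (r : ℕ → ℝ) (h : ∀ m ≤ M, ∑ n ∈ Finset.range N, r n * (n : ℝ) ^ m = 0)
    (q : ℝ[X]) (hq : q.natDegree ≤ M) : ∑ n ∈ Finset.range N, r n * q.eval (n : ℝ) = 0 := by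
  have h1 : ∀ n : ℕ, q.eval (n : ℝ) = ∑ m ∈ Finset.range (M + 1), q.coeff m * (n : ℝ) ^ m :=
    fun n => Polynomial.eval_eq_sum_range' (Nat.lt_succ_of_le hq) _
  calc ∑ n ∈ Finset.range N, r n * q.eval (n : ℝ)
      = ∑ n ∈ Finset.range N, ∑ m ∈ Finset.range (M + 1), q.coeff m * (r n * (n : ℝ) ^ m) := by
        refine Finset.sum_congr rfl fun n _ => ?_
        rw [h1 n, Finset.mul_sum]
        exact Finset.sum_congr rfl fun m _ => by ring
    _ = ∑ m ∈ Finset.range (M + 1), q.coeff m * ∑ n ∈ Finset.range N, r n * (n : ℝ) ^ m := by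
        rw [Finset.sum_comm]
        exact Finset.sum_congr rfl fun m _ => by rw [Finset.mul_sum]
    _ = 0 := by
        refine Finset.sum_eq_zero fun m hm => ?_
        rw [h m (Nat.lt_succ_iff.1 (Finset.mem_range.1 hm)), mul_zero]

lemma rep (P : ℝ[X]) (N : ℕ) (hd : P.natDegree < N) :
    P = ∑ i ∈ Finset.range N, C ((taylor 1 P).coeff i) * (X - C 1) ^ i := by
  have h1 : taylor 1 P = ∑ i ∈ Finset.range N, Polynomial.monomial i ((taylor 1 P).coeff i) :=
    Polynomial.as_sum_range' _ N (by rwa [natDegree_taylor])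
  have h2 := congrArg (taylor (-1 : ℝ)) h1
  rw [taylor_taylor, neg_add_cancel, taylor_zero, map_sum] at h2
  conv_lhs => rw [h2]
  refine Finset.sum_congr rfl fun i _ => ?_
  rw [taylor_apply, Polynomial.monomial_comp]
  congr 2
  rw [map_neg, C_1, sub_eq_add_neg]

end SpectralNullAux

open SpectralNullAux Polynomial

/-- **Theorem 3 (subspace characterization).** A trigonometric polynomial
`f θ = ∑_{n<N} r_n e^{inθ}` with real coefficients has an `M`-th order spectral
null at `θ = 0` iff it is a real linear combination of the functions
`g_n(θ) = (1 - e^{iθ})^n` for `n = M+1, …, N−1`. -/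
theorem spectral_null_subspace (N M : ℕ) (hN : 2 ≤ N) (hM : M ≤ N - 2)
    (r : ℕ → ℝ) (f : ℝ → ℂ)
    (hf : ∀ θ : ℝ, f θ = ∑ n ∈ Finset.range N,
      (r n : ℂ) * Complex.exp (Complex.I * (n : ℂ) * (θ : ℂ))) :
    (∀ m : ℕ, m ≤ M → iteratedDeriv m f 0 = 0) ↔
    (∃ a : ℕ → ℝ, ∀ θ : ℝ, f θ = ∑ m ∈ Finset.range (N - M - 1),
      (a m : ℂ) * (1 - Complex.exp (Complex.I * (θ : ℂ))) ^ (m + M + 1)) := by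
  constructor
  · intro hderiv
    -- Step 1: real power sums vanish.
    have hps : ∀ m ≤ M, ∑ n ∈ Finset.range N, r n * (n : ℝ) ^ m = 0 := by
      intro m hm
      have h0 := lemA0 N (fun n => (r n : ℂ)) f hf m
      rw [hderiv m hm] at h0
      have h2 : ∑ n ∈ Finset.range N, (r n : ℂ) * (Complex.I * n) ^ m
          = Complex.I ^ m * ((∑ n ∈ Finset.range N, r n * (n : ℝ) ^ m : ℝ) : ℂ) := by
        push_cast
        rw [Finset.mul_sum]
        refine Finset.sum_congr rfl fun n _ => ?_
        rw [mul_pow]; ring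
      rw [h2] at h0
      have h3 := (mul_eq_zero.1 h0.symm).resolve_left (pow_ne_zero _ Complex.I_ne_zero)
      exact_mod_cast h3
    -- Step 2: the associated real polynomial.
    set P : ℝ[X] := ∑ n ∈ Finset.range N, C (r n) * X ^ n with hPdef
    have hPcoeff : ∀ k, k < N → P.coeff k = r k := by
      intro k hk
      rw [hPdef, Polynomial.finset_sum_coeff]
      simp [Polynomial.coeff_C_mul, Polynomial.coeff_X_pow, Finset.sum_ite_eq, hk]
    have hP0 : ∀ j, N ≤ j → P.coeff j = 0 := by
      intro j hj
      rw [hPdef, Polynomial.finset_sum_coeff]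
      refine Finset.sum_eq_zero fun n hn => ?_
      have hn' := Finset.mem_range.1 hn
      rw [Polynomial.coeff_C_mul, Polynomial.coeff_X_pow, if_neg (by omega), mul_zero]
    have hdeg : P.natDegree < N := by
      have h1 : P.natDegree ≤ N - 1 := by
        rw [hPdef]
        refine Polynomial.natDegree_sum_le_of_forall_le _ _ fun i hi => ?_
        refine le_trans (Polynomial.natDegree_C_mul_le _ _) ?_
        rw [Polynomial.natDegree_X_pow]
        have := Finset.mem_range.1 hi
        omega
      omega
    -- Step 3: Taylor coefficients at 1 vanish up to order M.
    have htay : ∀ m ≤ M, (taylor 1 P).coeff m = 0 := by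
      intro m hm
      have hdesc : ∑ n ∈ Finset.range N, P.coeff n * (n.descFactorial m : ℝ) = 0 := by
        have hF := lemF N M r hps (descPochhammer ℝ m)
          (by rw [descPochhammer_natDegree]; exact hm)
        rw [← hF]
        refine Finset.sum_congr rfl fun n hn => ?_
        rw [hPcoeff n (Finset.mem_range.1 hn), descPochhammer_eval_eq_descFactorial]
      have hder : (derivative^[m] P).eval 1 = 0 := by
        rw [lemG m P N hP0]; exact hdesc
      have hh := congrFun (Polynomial.factorial_smul_hasseDeriv (R := ℝ) m) P
      rw [Polynomial.taylor_coeff]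
      have h4 : (m.factorial : ℝ) * (Polynomial.hasseDeriv m P).eval 1 = 0 := by
        rw [← hder, ← hh]
        simp [nsmul_eq_mul]
      have h5 : (m.factorial : ℝ) ≠ 0 := Nat.cast_ne_zero.2 m.factorial_ne_zero
      exact (mul_eq_zero.1 h4).resolve_left h5
    -- Step 4: the representation.
    refine ⟨fun m => (-1 : ℝ) ^ (M + 1 + m) * (taylor 1 P).coeff (M + 1 + m), fun θ => ?_⟩
    have he : f θ = Polynomial.aeval (Complex.exp (Complex.I * (θ : ℂ))) P := by
      rw [hf θ, hPdef, map_sum]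
      refine Finset.sum_congr rfl fun n _ => ?_
      rw [map_mul, map_pow, Polynomial.aeval_X, Polynomial.aeval_C]
      rw [show Complex.I * (n : ℂ) * (θ : ℂ) = (n : ℂ) * (Complex.I * θ) by ring,
        Complex.exp_nat_mul]
      simp [Complex.coe_algebraMap]
    rw [he]
    conv_lhs => rw [rep P N hdeg, map_sum]
    have hterm : ∀ i, Polynomial.aeval (Complex.exp (Complex.I * (θ : ℂ)))
        (C ((taylor 1 P).coeff i) * (X - C 1) ^ i)
        = ((taylor 1 P).coeff i : ℂ) * (Complex.exp (Complex.I * (θ : ℂ)) - 1) ^ i := by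
      intro i
      rw [map_mul, map_pow, map_sub, Polynomial.aeval_X, Polynomial.aeval_C, Polynomial.aeval_C]
      simp [Complex.coe_algebraMap]
    have hsplit : ∑ i ∈ Finset.range N, Polynomial.aeval (Complex.exp (Complex.I * (θ : ℂ)))
          (C ((taylor 1 P).coeff i) * (X - C 1) ^ i)
        = ∑ i ∈ Finset.range (M + 1), ((taylor 1 P).coeff i : ℂ) * (Complex.exp (Complex.I * (θ : ℂ)) - 1) ^ i
          + ∑ i ∈ Finset.range (N - M - 1), ((taylor 1 P).coeff (M + 1 + i) : ℂ)
              * (Complex.exp (Complex.I * (θ : ℂ)) - 1) ^ (M + 1 + i) := by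
      have hNeq : N = (M + 1) + (N - M - 1) := by omega
      rw [show Finset.range N = Finset.range ((M + 1) + (N - M - 1)) by rw [← hNeq],
        Finset.sum_range_add]
      congr 1
      · exact Finset.sum_congr rfl fun i _ => hterm i
      · exact Finset.sum_congr rfl fun i _ => hterm (M + 1 + i)
    rw [hsplit]
    have hzero : ∑ i ∈ Finset.range (M + 1), ((taylor 1 P).coeff i : ℂ)
        * (Complex.exp (Complex.I * (θ : ℂ)) - 1) ^ i = 0 := by
      refine Finset.sum_eq_zero fun i hi => ?_
      rw [htay i (Nat.lt_succ_iff.1 (Finset.mem_range.1 hi))]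
      simp
    rw [hzero, zero_add]
    refine Finset.sum_congr rfl fun i _ => ?_
    have hix : i + M + 1 = M + 1 + i := by omega
    rw [hix]
    push_cast
    have hneg : (1 - Complex.exp (Complex.I * (θ : ℂ))) ^ (M + 1 + i)
        = (-1 : ℂ) ^ (M + 1 + i) * (Complex.exp (Complex.I * (θ : ℂ)) - 1) ^ (M + 1 + i) := by
      rw [← neg_pow, neg_sub]
    rw [hneg]
    have h4 : ((-1 : ℂ)) ^ (M + 1 + i) * ((-1 : ℂ)) ^ (M + 1 + i) = 1 := by
      rw [← mul_pow]; norm_num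
    have h5 : ∀ z w : ℂ, ((-1 : ℂ)) ^ (M + 1 + i) * z * (((-1 : ℂ)) ^ (M + 1 + i) * w) = z * w := by
      intro z w
      calc ((-1 : ℂ)) ^ (M + 1 + i) * z * (((-1 : ℂ)) ^ (M + 1 + i) * w)
          = (((-1 : ℂ)) ^ (M + 1 + i) * ((-1 : ℂ)) ^ (M + 1 + i)) * (z * w) := by ring
        _ = z * w := by rw [h4, one_mul]
    exact (h5 _ _).symm
  · rintro ⟨a, ha⟩ m hm
    set Qc : ℂ[X] := ∑ i ∈ Finset.range (N - M - 1), C ((a i : ℂ)) * (1 - X) ^ (i + M + 1) with hQdef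
    have h1X : (1 - X : ℂ[X]) = -(X - C 1) := by rw [C_1]; ring
    have hQdeg : Qc.natDegree ≤ N - 1 := by
      rw [hQdef]
      refine Polynomial.natDegree_sum_le_of_forall_le _ _ fun i hi => ?_
      refine le_trans (Polynomial.natDegree_C_mul_le _ _) ?_
      refine le_trans (Polynomial.natDegree_pow_le) ?_
      rw [h1X, Polynomial.natDegree_neg, Polynomial.natDegree_X_sub_C]
      have := Finset.mem_range.1 hi
      omega
    have hQ0 : ∀ j, N ≤ j → Qc.coeff j = 0 := fun j hj =>
      Polynomial.coeff_eq_zero_of_natDegree_lt (by omega)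
    have hfQ : ∀ θ : ℝ, f θ = ∑ n ∈ Finset.range N,
        Qc.coeff n * Complex.exp (Complex.I * (n : ℂ) * (θ : ℂ)) := by
      intro θ
      have hev : Qc.eval (Complex.exp (Complex.I * (θ : ℂ))) = ∑ i ∈ Finset.range (N - M - 1),
          (a i : ℂ) * (1 - Complex.exp (Complex.I * (θ : ℂ))) ^ (i + M + 1) := by
        rw [hQdef, Polynomial.eval_finset_sum]
        refine Finset.sum_congr rfl fun i _ => ?_
        simp
      have hev2 : Qc.eval (Complex.exp (Complex.I * (θ : ℂ)))
          = ∑ n ∈ Finset.range N, Qc.coeff n * (Complex.exp (Complex.I * (θ : ℂ))) ^ n :=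
        Polynomial.eval_eq_sum_range' (by omega) _
      rw [ha θ, ← hev, hev2]
      refine Finset.sum_congr rfl fun n _ => ?_
      rw [show Complex.I * (n : ℂ) * (θ : ℂ) = (n : ℂ) * (Complex.I * θ) by ring,
        Complex.exp_nat_mul]
    have hdvd : (X - C 1 : ℂ[X]) ^ (M + 1) ∣ Qc := by
      rw [hQdef]
      refine Finset.dvd_sum fun i _ => dvd_mul_of_dvd_right ?_ _
      have hp : (1 - X : ℂ[X]) ^ (i + M + 1) = (1 - X) ^ i * ((-1) ^ (M + 1) * (X - C 1) ^ (M + 1)) := by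
        rw [C_1, ← neg_pow, neg_sub, ← pow_add, Nat.add_assoc]
      rw [hp]
      exact (dvd_rfl.mul_left _).mul_left _
    have h0 := lemA0 N (fun n => Qc.coeff n) f hfQ m
    rw [h0]
    have hT : ((fun q : ℂ[X] => X * derivative q)^[m] Qc).eval 1
        = ∑ n ∈ Finset.range N, (n : ℂ) ^ m * Qc.coeff n := by
      rw [evalOne _ N (fun j hj => by rw [coeff_T_iter, hQ0 j hj, mul_zero])]
      exact Finset.sum_congr rfl fun n _ => coeff_T_iter Qc m n
    have hE := lemE M Qc hdvd m hm
    calc ∑ n ∈ Finset.range N, Qc.coeff n * (Complex.I * n) ^ m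
        = Complex.I ^ m * ∑ n ∈ Finset.range N, (n : ℂ) ^ m * Qc.coeff n := by
          rw [Finset.mul_sum]
          refine Finset.sum_congr rfl fun n _ => ?_
          rw [mul_pow]; ring
      _ = Complex.I ^ m * ((fun q : ℂ[X] => X * derivative q)^[m] Qc).eval 1 := by rw [hT]
      _ = 0 := by rw [hE, mul_zero]
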